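/- Fix q ∈ (−4, 2) and set β := 32/((2 − q)(4 + q)²) (so that β ≥ 1), and define V₁(s) := 4·cos((1/3)·arccos(1 − 2/(s⁶β)) − 2π/3) for s ≥ 1. Then, as s → ∞, V₁(s) + 2 − √(16/(3β))·s⁻³ = O(s⁻⁶). In particular V₁(s) → −2 as s → ∞. -/

import Mathlib

open Filter Asymptotics

private lemma key_viete (x : ℝ) (hx0 : 0 < x) (hx1 : x ≤ 1) :
    |4 * Real.cos (x / 3 - 2 * Real.pi / 3) + 2 - 4 / Real.sqrt 3 * Real.sin (x / 2)|
      ≤ x ^ 2 := by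
  have h3 : Real.sqrt 3 ^ 2 = 3 := Real.sq_sqrt (by norm_num)
  have h3pos : (0 : ℝ) < Real.sqrt 3 := Real.sqrt_pos.2 (by norm_num)
  have h3lb : (1 : ℝ) ≤ Real.sqrt 3 := by nlinarith
  have h2 : (2 * Real.pi / 3) = Real.pi - Real.pi / 3 := by ring
  have hcosv : Real.cos (2 * Real.pi / 3) = -(1 / 2) := by
    rw [h2, Real.cos_pi_sub, Real.cos_pi_div_three]
  have hsinv : Real.sin (2 * Real.pi / 3) = Real.sqrt 3 / 2 := by
    rw [h2, Real.sin_pi_sub, Real.sin_pi_div_three]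
  have hexp : Real.cos (x / 3 - 2 * Real.pi / 3)
      = Real.cos (x / 3) * (-(1 / 2)) + Real.sin (x / 3) * (Real.sqrt 3 / 2) := by
    rw [Real.cos_sub, hcosv, hsinv]
  have ha1 : Real.sin (x / 3) ≤ x / 3 := Real.sin_le (by linarith)
  have ha2 : x / 3 - (x / 3) ^ 3 / 4 < Real.sin (x / 3) :=
    lt_of_le_of_lt (by have := pow_pos (show (0:ℝ) < x / 3 by linarith) 3; linarith)
      (Real.sin_gt_sub_cube (by linarith))
  have hb1 : Real.sin (x / 2) ≤ x / 2 := Real.sin_le (by linarith)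
  have hb2 : x / 2 - (x / 2) ^ 3 / 4 < Real.sin (x / 2) :=
    lt_of_le_of_lt (by have := pow_pos (show (0:ℝ) < x / 2 by linarith) 3; linarith)
      (Real.sin_gt_sub_cube (by linarith))
  have hc1 : Real.cos (x / 3) ≤ 1 := Real.cos_le_one _
  have hc2 : 1 - (x / 3) ^ 2 / 2 ≤ Real.cos (x / 3) := Real.one_sub_sq_div_two_le_cos
  have hcube : 0 ≤ x ^ 2 * (1 - x) := mul_nonneg (sq_nonneg x) (by linarith)
  rw [hexp, abs_le]
  constructor
  · rw [div_mul_eq_mul_div, ← sub_nonneg]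
    have key : 0 ≤ Real.sqrt 3 * (4 * (Real.cos (x / 3) * (-(1 / 2)) +
        Real.sin (x / 3) * (Real.sqrt 3 / 2)) + 2 + x ^ 2) - 4 * Real.sin (x / 2) := by
      nlinarith [mul_nonneg h3pos.le (sub_nonneg.2 hc1),
        mul_nonneg (sq_nonneg x) (by linarith : (0:ℝ) ≤ Real.sqrt 3 - 1)]
    have hdiv := div_nonneg key h3pos.le
    calc (0:ℝ) ≤ (Real.sqrt 3 * (4 * (Real.cos (x / 3) * (-(1 / 2)) +
          Real.sin (x / 3) * (Real.sqrt 3 / 2)) + 2 + x ^ 2) - 4 * Real.sin (x / 2)) /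
          Real.sqrt 3 := hdiv
      _ = 4 * (Real.cos (x / 3) * (-(1 / 2)) + Real.sin (x / 3) * (Real.sqrt 3 / 2)) + 2
          - 4 * Real.sin (x / 2) / Real.sqrt 3 + x ^ 2 := by
          field_simp
          ring
      _ = 4 * (Real.cos (x / 3) * (-(1 / 2)) + Real.sin (x / 3) * (Real.sqrt 3 / 2)) + 2
          - 4 * Real.sin (x / 2) / Real.sqrt 3 - -x ^ 2 := by ring
  · rw [div_mul_eq_mul_div, ← sub_nonneg]
    have key : 0 ≤ 4 * Real.sin (x / 2) - Real.sqrt 3 * (4 * (Real.cos (x / 3) * (-(1 / 2)) +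
        Real.sin (x / 3) * (Real.sqrt 3 / 2)) + 2 - x ^ 2) := by
      nlinarith [mul_nonneg h3pos.le
          (by nlinarith : (0:ℝ) ≤ Real.cos (x / 3) - (1 - (x / 3) ^ 2 / 2)),
        mul_nonneg (sq_nonneg x) (by linarith : (0:ℝ) ≤ Real.sqrt 3 - 1)]
    have hdiv := div_nonneg key h3pos.le
    calc (0:ℝ) ≤ (4 * Real.sin (x / 2) - Real.sqrt 3 * (4 * (Real.cos (x / 3) * (-(1 / 2)) +
          Real.sin (x / 3) * (Real.sqrt 3 / 2)) + 2 - x ^ 2)) / Real.sqrt 3 := hdiv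
      _ = x ^ 2 - (4 * (Real.cos (x / 3) * (-(1 / 2)) + Real.sin (x / 3) * (Real.sqrt 3 / 2)) + 2
          - 4 * Real.sin (x / 2) / Real.sqrt 3) := by
          field_simp
          ring

/-- Large-`s` expansion of the Viète branch `V₁`: for `q ∈ (-4, 2)` and
`β = 32/((2 - q)(4 + q)²)`, `V₁(s) + 2 - √(16/(3β)) s⁻³ = O(s⁻⁶)` as `s → ∞`;
in particular `V₁(s) → -2`. -/
theorem stmt_12 (q : ℝ) (hq : q ∈ Set.Ioo (-4 : ℝ) 2)
    (β : ℝ) (hβ : β = 32 / ((2 - q) * (4 + q) ^ 2))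
    (V₁ : ℝ → ℝ)
    (hV : ∀ s : ℝ, 1 ≤ s →
      V₁ s = 4 * Real.cos (Real.arccos (1 - 2 / (s ^ 6 * β)) / 3 - 2 * Real.pi / 3)) :
    ((fun s : ℝ => V₁ s + 2 - Real.sqrt (16 / (3 * β)) * s ^ (-3 : ℤ))
        =O[Filter.atTop] fun s : ℝ => s ^ (-6 : ℤ)) ∧
    Filter.Tendsto V₁ Filter.atTop (nhds (-2)) := by
  obtain ⟨hq1, hq2⟩ := hq
  have hden : 0 < (2 - q) * (4 + q) ^ 2 := by
    apply mul_pos (by linarith)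
    exact pow_pos (by linarith) 2
  have hβpos : 0 < β := hβ ▸ div_pos (by norm_num) hden
  have hβ1 : 1 ≤ β := by
    rw [hβ, le_div_iff₀ hden]
    nlinarith [sq_nonneg q]
  have main : ∀ s : ℝ, 2 ≤ s →
      |V₁ s + 2 - Real.sqrt (16 / (3 * β)) * (s : ℝ) ^ (-3 : ℤ)| ≤ 8 * s ^ (-6 : ℤ) := by
    intro s hs
    have hs0 : (0 : ℝ) < s := by linarith
    have hs6 : (0 : ℝ) < s ^ 6 := by positivity
    set u : ℝ := 2 / (s ^ 6 * β) with hu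
    have hupos : 0 < u := by positivity
    have hs64 : (64 : ℝ) ≤ s ^ 6 := by
      calc (64 : ℝ) = 2 ^ 6 := by norm_num
        _ ≤ s ^ 6 := by gcongr
    have hule : u ≤ 1 / 32 := by
      rw [hu, div_le_div_iff₀ (by positivity) (by norm_num)]
      nlinarith
    set x : ℝ := Real.arccos (1 - u) with hx
    have hm1 : (-1 : ℝ) ≤ 1 - u := by linarith
    have hm2 : 1 - u ≤ 1 := by linarith
    have hx0 : 0 < x := Real.arccos_pos.2 (by linarith)
    have hxpi : x ≤ Real.pi := Real.arccos_le_pi _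
    have hcosx : Real.cos x = 1 - u := Real.cos_arccos hm1 hm2
    have hx1 : x ≤ 1 := by
      by_contra h
      push_neg at h
      have hlt := Real.cos_lt_cos_of_nonneg_of_le_pi (by norm_num) hxpi h
      rw [hcosx] at hlt
      have h23 : Real.cos 1 ≤ 2 / 3 := Real.cos_one_le.trans (by norm_num)
      linarith
    have hsinh : Real.sin (x / 2) = Real.sqrt (u / 2) := by
      rw [Real.sin_half_eq_sqrt hx0.le (by linarith [Real.pi_pos]), hcosx]
      norm_num
    have hterm : Real.sqrt (16 / (3 * β)) * (s : ℝ) ^ (-3 : ℤ)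
        = 4 / Real.sqrt 3 * Real.sin (x / 2) := by
      rw [hsinh]
      have hsinv : (s : ℝ) ^ (-3 : ℤ) = Real.sqrt ((s ^ 6)⁻¹) := by
        rw [show ((s : ℝ) ^ 6)⁻¹ = ((s ^ 3)⁻¹) ^ 2 by ring,
          Real.sqrt_sq (by positivity)]
        rw [zpow_neg, ← zpow_natCast s 3]
        norm_num
      rw [hsinv, ← Real.sqrt_mul (by positivity)]
      rw [show (4 : ℝ) / Real.sqrt 3 = Real.sqrt 16 / Real.sqrt 3 by
        rw [show (16:ℝ) = 4 ^ 2 by norm_num, Real.sqrt_sq (by norm_num)]]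
      rw [← Real.sqrt_div (by norm_num : (0:ℝ) ≤ 16), ← Real.sqrt_mul (by positivity)]
      congr 1
      rw [hu]
      field_simp
    have hVs : V₁ s = 4 * Real.cos (x / 3 - 2 * Real.pi / 3) := hV s (by linarith)
    have hbound := key_viete x hx0 hx1
    have hxu : x ^ 2 ≤ 4 * u := by
      have hpos : 0 ≤ x / 2 - (x / 2) ^ 3 / 4 := by nlinarith
      have hsb : x / 2 - (x / 2) ^ 3 / 4 < Real.sin (x / 2) :=
        lt_of_le_of_lt (by have := pow_pos (show (0:ℝ) < x / 2 by linarith) 3; linarith)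
          (Real.sin_gt_sub_cube (by linarith))
      have hsq : Real.sin (x / 2) ^ 2 = u / 2 := by
        rw [hsinh, Real.sq_sqrt (by positivity)]
      nlinarith [pow_le_pow_left₀ hpos hsb.le 2,
        mul_nonneg (sq_nonneg x) (by nlinarith : (0:ℝ) ≤ 1 - x ^ 2)]
    have hzeq : (s : ℝ) ^ (-6 : ℤ) = (s ^ 6)⁻¹ := by
      rw [zpow_neg, ← zpow_natCast s 6]; norm_num
    have hfin : (4 : ℝ) * u ≤ 8 * s ^ (-6 : ℤ) := by
      rw [hzeq, hu]
      have h1 : 2 / (s ^ 6 * β) ≤ 2 / s ^ 6 := by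
        gcongr
        exact le_mul_of_one_le_right hs6.le hβ1
      calc 4 * (2 / (s ^ 6 * β)) ≤ 4 * (2 / s ^ 6) := by linarith
        _ = 8 * (s ^ 6)⁻¹ := by ring
    calc |V₁ s + 2 - Real.sqrt (16 / (3 * β)) * (s : ℝ) ^ (-3 : ℤ)|
        = |4 * Real.cos (x / 3 - 2 * Real.pi / 3) + 2
            - 4 / Real.sqrt 3 * Real.sin (x / 2)| := by rw [hVs, hterm]
      _ ≤ x ^ 2 := hbound
      _ ≤ 4 * u := hxu
      _ ≤ 8 * s ^ (-6 : ℤ) := hfin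
  have hO : (fun s : ℝ => V₁ s + 2 - Real.sqrt (16 / (3 * β)) * s ^ (-3 : ℤ))
      =O[Filter.atTop] fun s : ℝ => s ^ (-6 : ℤ) := by
    rw [isBigO_iff]
    refine ⟨8, ?_⟩
    filter_upwards [eventually_ge_atTop (2 : ℝ)] with s hs
    have hs0 : (0 : ℝ) < s := by linarith
    have h6pos : (0 : ℝ) ≤ (s : ℝ) ^ (-6 : ℤ) := by positivity
    rw [Real.norm_eq_abs, Real.norm_eq_abs, abs_of_nonneg h6pos]
    exact main s hs
  refine ⟨hO, ?_⟩
  have h6 : Filter.Tendsto (fun s : ℝ => (s : ℝ) ^ (-6 : ℤ)) atTop (nhds 0) :=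
    tendsto_zpow_atTop_zero (by norm_num)
  have h1 : Filter.Tendsto
      (fun s : ℝ => V₁ s + 2 - Real.sqrt (16 / (3 * β)) * s ^ (-3 : ℤ)) atTop (nhds 0) :=
    hO.trans_tendsto h6
  have h3 : Filter.Tendsto
      (fun s : ℝ => Real.sqrt (16 / (3 * β)) * (s : ℝ) ^ (-3 : ℤ)) atTop (nhds 0) := by
    have := (tendsto_zpow_atTop_zero (show (-3 : ℤ) < 0 by norm_num)).const_mul
      (Real.sqrt (16 / (3 * β)))
    simpa using this
  have h4 : Filter.Tendsto (fun s : ℝ => V₁ s + 2) atTop (nhds 0) := by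
    have := h1.add h3
    simp only [add_zero] at this
    exact this.congr (fun s => by ring)
  have h5 := h4.sub_const 2
  simp only [zero_sub] at h5
  exact h5.congr (fun s => by ring)
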